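/- For every positive integer $k$, $\sum_{n=1}^{\infty} (-1)^{n-1}\frac{H_n}{n+k} = (-1)^{k-1}\left( \frac{1}{2}\ln^2 2 - \ln 2\,\big(H_{k-1} + L_{k-1}(1)\big) + \sum_{i=1}^{k-1} \frac{L_i(1)}{i} \right)$. -/

import Mathlib

open Filter

noncomputable def H (n : ℕ) : ℝ := ∑ j ∈ Finset.Icc 1 n, (1 : ℝ) / j

noncomputable def La (m n : ℕ) : ℝ := ∑ j ∈ Finset.Icc 1 n, (-1 : ℝ) ^ (j - 1) / (j : ℝ) ^ m

lemma H_zero : H 0 = 0 := by simp [H]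

lemma H_succ (n : ℕ) : H (n + 1) = H n + 1 / (n + 1) := by
  rw [H, H, Finset.sum_Icc_succ_top (by omega)]
  push_cast; ring

lemma La_zero : La 1 0 = 0 := by simp [La]

lemma La_succ (n : ℕ) : La 1 (n + 1) = La 1 n + (-1 : ℝ) ^ n / (n + 1) := by
  rw [La, La, Finset.sum_Icc_succ_top (by omega)]
  push_cast; rw [pow_one]

lemma H_eq_harmonic (n : ℕ) : H n = (harmonic n : ℝ) := by
  rw [H, harmonic_eq_sum_Icc]
  push_cast
  simp [one_div]

lemma H_nonneg (n : ℕ) : 0 ≤ H n := by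
  rw [H]; positivity

lemma H_le (n : ℕ) : H n ≤ 1 + Real.log n := by
  rw [H_eq_harmonic]; exact_mod_cast harmonic_le_one_add_log n

noncomputable def P (N : ℕ) (x : ℝ) : ℝ := ∑ n ∈ Finset.range N, (-1:ℝ)^n * x^(n+1)/(n+1)
noncomputable def fS (N : ℕ) (x : ℝ) : ℝ := ∑ n ∈ Finset.range N, (-1:ℝ)^n * H (n+1) * x^(n+1)

lemma key_alg (N : ℕ) (x : ℝ) : (1+x) * fS N x = P N x - (-1:ℝ)^N * H N * x^(N+1) := by
  induction N with
  | zero => simp [P, fS, H_zero]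
  | succ N ih =>
    simp only [fS, P, Finset.sum_range_succ] at ih ⊢
    rw [mul_add, ih, H_succ]
    push_cast; ring

lemma P_zero (N : ℕ) : P N 0 = 0 := by simp [P]

lemma geom_aux (N : ℕ) {t : ℝ} (ht : (1:ℝ) + t ≠ 0) :
    ∑ n ∈ Finset.range N, (-1:ℝ)^n * t^n = (1 - (-t)^N)/(1+t) := by
  have key : (1+t) * ∑ n ∈ Finset.range N, (-1:ℝ)^n * t^n = 1 - (-t)^N := by
    induction N with
    | zero => simp
    | succ N ih =>
      rw [Finset.sum_range_succ, mul_add, ih, pow_succ]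
      ring
  rw [eq_div_iff ht, ← key]
  ring

lemma hasDerivAt_P (N : ℕ) (t : ℝ) :
    HasDerivAt (fun y => P N y) (∑ n ∈ Finset.range N, (-1:ℝ)^n * t^n) t := by
  simp only [P]
  apply HasDerivAt.fun_sum
  intro n _
  have h1 := ((hasDerivAt_pow (n+1) t).const_mul ((-1:ℝ)^n)).div_const ((n:ℝ)+1)
  simp only [Nat.add_sub_cancel, Nat.cast_add, Nat.cast_one] at h1
  refine h1.congr_deriv ?_
  have : ((n:ℝ)+1) ≠ 0 := by positivity
  field_simp

lemma hasDerivAt_logP (N : ℕ) {t : ℝ} (ht : 0 < 1 + t) :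
    HasDerivAt (fun y => Real.log (1+y) - P N y) ((-t)^N/(1+t)) t := by
  have h1 : HasDerivAt (fun y : ℝ => Real.log (1+y)) (1/(1+t)) t := by
    have := (Real.hasDerivAt_log ht.ne').comp t ((hasDerivAt_id t).const_add 1)
    simpa [one_div, Function.comp_def] using this
  have h2 := (h1.sub (hasDerivAt_P N t))
  refine h2.congr_deriv ?_
  rw [geom_aux N ht.ne']
  field_simp
  ring

lemma log_sub_P_bound (N : ℕ) {x : ℝ} (hx0 : 0 ≤ x) (hx1 : x ≤ 1) :
    |Real.log (1+x) - P N x| ≤ 1/(N+1) := by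
  have hder : ∀ t ∈ Set.uIcc (0:ℝ) x, HasDerivAt (fun y => Real.log (1+y) - P N y) ((-t)^N/(1+t)) t := by
    intro t ht
    rw [Set.uIcc_of_le hx0] at ht
    exact hasDerivAt_logP N (by linarith [ht.1])
  have hcont : ContinuousOn (fun t : ℝ => (-t)^N/(1+t)) (Set.uIcc 0 x) := by
    apply ContinuousOn.div
    · fun_prop
    · fun_prop
    · intro t ht
      rw [Set.uIcc_of_le hx0] at ht
      intro h; linarith [ht.1]
  have heq := intervalIntegral.integral_eq_sub_of_hasDerivAt hder (hcont.intervalIntegrable)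
  rw [P_zero] at heq
  simp only [add_zero, Real.log_one, sub_zero, zero_sub, sub_self] at heq
  rw [← heq]
  have hN : (0:ℝ) < N + 1 := by positivity
  calc |∫ t in (0:ℝ)..x, (-t)^N/(1+t)| ≤ ∫ t in (0:ℝ)..x, |(-t)^N/(1+t)| :=
        intervalIntegral.abs_integral_le_integral_abs hx0
    _ ≤ ∫ t in (0:ℝ)..x, t^N := by
        apply intervalIntegral.integral_mono_on hx0
        · exact hcont.abs.intervalIntegrable
        · exact (continuous_pow N).intervalIntegrable 0 x
        · intro t ht
          rw [abs_div, abs_pow, abs_neg]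
          have h1 : |t| = t := abs_of_nonneg ht.1
          have h2 : (1:ℝ) ≤ |1 + t| := by
            rw [abs_of_nonneg (by linarith [ht.1])]; linarith [ht.1]
          rw [h1]
          exact div_le_self (pow_nonneg ht.1 N) h2
    _ = (x^(N+1) - 0^(N+1))/(N+1) := integral_pow N
    _ ≤ 1/(N+1) := by
        rw [zero_pow (by omega), sub_zero]
        gcongr
        exact pow_le_one₀ hx0 hx1

lemma pos_on_uIcc {x : ℝ} (hx : x ∈ Set.uIcc (0:ℝ) 1) : 0 < 1 + x := by
  rw [Set.uIcc_of_le zero_le_one] at hx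
  linarith [hx.1]

noncomputable def J (k : ℕ) : ℝ := ∫ x in (0:ℝ)..1, x^k/(1+x)
noncomputable def II (m : ℕ) : ℝ := ∫ x in (0:ℝ)..1, x^m * Real.log (1+x)/(1+x)

lemma contJ (k : ℕ) : ContinuousOn (fun x : ℝ => x^k/(1+x)) (Set.uIcc 0 1) := by
  apply ContinuousOn.div (by fun_prop) (by fun_prop)
  exact fun x hx => (pos_on_uIcc hx).ne'

lemma contLog : ContinuousOn (fun x : ℝ => Real.log (1+x)) (Set.uIcc 0 1) := by
  apply ContinuousOn.log (by fun_prop)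
  exact fun x hx => (pos_on_uIcc hx).ne'

lemma contII (m : ℕ) : ContinuousOn (fun x : ℝ => x^m * Real.log (1+x)/(1+x)) (Set.uIcc 0 1) := by
  apply ContinuousOn.div (ContinuousOn.mul (by fun_prop) contLog) (by fun_prop)
  exact fun x hx => (pos_on_uIcc hx).ne'

lemma hasDerivAt_log1p {t : ℝ} (ht : 0 < 1 + t) :
    HasDerivAt (fun y : ℝ => Real.log (1+y)) (1/(1+t)) t := by
  have := (Real.hasDerivAt_log ht.ne').comp t ((hasDerivAt_id t).const_add 1)
  simpa [one_div, Function.comp_def] using this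

lemma J_zero : J 0 = Real.log 2 := by
  have heq := intervalIntegral.integral_eq_sub_of_hasDerivAt
    (f := fun y : ℝ => Real.log (1+y)) (f' := fun y : ℝ => (y:ℝ)^0/(1+y))
    (fun t ht => by simpa using hasDerivAt_log1p (pos_on_uIcc ht)) ((contJ 0).intervalIntegrable)
  rw [J, heq]
  norm_num

lemma J_succ (k : ℕ) : J (k+1) = 1/(k+1) - J k := by
  have h1 : J (k+1) + J k = ∫ x in (0:ℝ)..1, (x^(k+1)/(1+x) + x^k/(1+x)) := by
    rw [J, J, intervalIntegral.integral_add ((contJ (k+1)).intervalIntegrable)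
      ((contJ k).intervalIntegrable)]
  have h2 : (∫ x in (0:ℝ)..1, (x^(k+1)/(1+x) + x^k/(1+x))) = ∫ x in (0:ℝ)..1, x^k := by
    apply intervalIntegral.integral_congr
    intro x hx
    have := pos_on_uIcc hx
    field_simp
    ring
  have h3 : (∫ x in (0:ℝ)..1, x^k) = 1/(k+1) := by
    rw [integral_pow]
    norm_num
  have := h1.trans (h2.trans h3)
  linarith

lemma J_closed (k : ℕ) : J k = (-1:ℝ)^k * (Real.log 2 - La 1 k) := by
  induction k with
  | zero => simp [J_zero, La_zero]
  | succ k ih =>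
    rw [J_succ, ih, La_succ, pow_succ]
    have he : (-1:ℝ)^k * (-1:ℝ)^k = 1 := by
      rw [← pow_add]
      exact Even.neg_one_pow ⟨k, by ring⟩
    have hk : ((k:ℝ)+1) ≠ 0 := by positivity
    field_simp
    linear_combination -he

lemma II_zero : II 0 = (Real.log 2)^2/2 := by
  have heq := intervalIntegral.integral_eq_sub_of_hasDerivAt
    (f := fun y : ℝ => (Real.log (1+y))^2/2) (f' := fun y : ℝ => (y:ℝ)^0 * Real.log (1+y)/(1+y))
    (fun t ht => by
      have h := ((hasDerivAt_log1p (pos_on_uIcc ht)).pow 2).div_const 2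
      refine h.congr_deriv ?_
      simp; ring) ((contII 0).intervalIntegrable)
  rw [II, heq]
  norm_num

lemma parts (m : ℕ) :
    (∫ x in (0:ℝ)..1, x^m * Real.log (1+x)) = Real.log 2/(m+1) - J (m+1)/(m+1) := by
  have hm : ((m:ℝ)+1) ≠ 0 := by positivity
  have heq := intervalIntegral.integral_eq_sub_of_hasDerivAt
    (f := fun y : ℝ => y^(m+1)/(m+1) * Real.log (1+y))
    (f' := fun y : ℝ => y^m * Real.log (1+y) + (1/((m:ℝ)+1)) * (y^(m+1)/(1+y)))
    (fun t ht => by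
      have h1 := ((hasDerivAt_pow (m+1) t).div_const ((m:ℝ)+1)).mul
        (hasDerivAt_log1p (pos_on_uIcc ht))
      refine h1.congr_deriv ?_
      simp only [Nat.add_sub_cancel]
      push_cast
      field_simp)
    (by
      apply ContinuousOn.intervalIntegrable
      apply ContinuousOn.add (ContinuousOn.mul (by fun_prop) contLog)
      exact (contJ (m+1)).const_smul (1/((m:ℝ)+1)) |>.congr (fun x _ => by simp [smul_eq_mul]))
  rw [intervalIntegral.integral_add, intervalIntegral.integral_const_mul] at heq
  · have : (∫ x in (0:ℝ)..1, x^(m+1)/(1+x)) = J (m+1) := rfl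
    rw [this] at heq
    simp only [one_pow, zero_pow, Real.log_one, add_zero] at heq
    norm_num at heq
    field_simp at heq ⊢
    linarith
  · exact ContinuousOn.intervalIntegrable (ContinuousOn.mul (by fun_prop) contLog)
  · exact ((contJ (m+1)).const_smul (1/((m:ℝ)+1)) |>.congr (fun x _ => by simp [smul_eq_mul])).intervalIntegrable

lemma II_rec (m : ℕ) : II (m+1) = Real.log 2/(m+1) - J (m+1)/(m+1) - II m := by
  have h1 : II (m+1) + II m = ∫ x in (0:ℝ)..1, (x^(m+1) * Real.log (1+x)/(1+x) + x^m * Real.log (1+x)/(1+x)) := by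
    rw [II, II, intervalIntegral.integral_add ((contII (m+1)).intervalIntegrable)
      ((contII m).intervalIntegrable)]
  have h2 : (∫ x in (0:ℝ)..1, (x^(m+1) * Real.log (1+x)/(1+x) + x^m * Real.log (1+x)/(1+x)))
      = ∫ x in (0:ℝ)..1, x^m * Real.log (1+x) := by
    apply intervalIntegral.integral_congr
    intro x hx
    have := pos_on_uIcc hx
    field_simp
    ring
  have := h1.trans (h2.trans (parts m))
  linarith

noncomputable def Af (m : ℕ) : ℝ :=
  (Real.log 2)^2/2 - Real.log 2 * (H m + La 1 m) + ∑ i ∈ Finset.Icc 1 m, La 1 i / i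

lemma Af_succ (m : ℕ) :
    Af (m+1) = Af m - Real.log 2 * ((1 + (-1:ℝ)^m)/(m+1)) + La 1 (m+1)/(m+1) := by
  rw [Af, Af, Finset.sum_Icc_succ_top (by omega), H_succ]
  nth_rewrite 1 [La_succ]
  push_cast
  ring

lemma II_closed (m : ℕ) : II m = (-1:ℝ)^m * Af m := by
  induction m with
  | zero => simp [II_zero, Af, H_zero, La_zero]
  | succ m ih =>
    rw [II_rec, ih, J_closed, Af_succ]
    have he : (-1:ℝ)^m * (-1:ℝ)^m = 1 := by
      rw [← pow_add]; exact Even.neg_one_pow ⟨m, by ring⟩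
    have hm : ((m:ℝ)+1) ≠ 0 := by positivity
    rw [pow_succ]
    field_simp
    linear_combination (-Real.log 2) * he

lemma partial_eq (k : ℕ) (hk : 0 < k) (N : ℕ) :
    (∑ n ∈ Finset.range N, (-1:ℝ)^n * H (n+1) / ((n:ℝ)+1+k))
      = ∫ x in (0:ℝ)..1, x^(k-1) * fS N x := by
  have h1 : (∫ x in (0:ℝ)..1, x^(k-1) * fS N x)
      = ∫ x in (0:ℝ)..1, ∑ n ∈ Finset.range N, ((-1:ℝ)^n * H (n+1)) * x^(k-1+(n+1)) := by
    apply intervalIntegral.integral_congr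
    intro x _
    simp only [fS, Finset.mul_sum]
    congr 1
    funext n
    ring
  rw [h1, intervalIntegral.integral_finset_sum
    (fun n _ => (Continuous.intervalIntegrable (by fun_prop) 0 1))]
  apply Finset.sum_congr rfl
  intro n _
  rw [intervalIntegral.integral_const_mul, integral_pow]
  have h2 : k - 1 + (n+1) = n + k := by omega
  rw [h2]
  have h3 : ((n:ℝ)+1+k) ≠ 0 := by positivity
  rw [one_pow, zero_pow (by omega), sub_zero, mul_one_div]
  push_cast
  congr 1
  ring

lemma cont_fS (k N : ℕ) : Continuous (fun x : ℝ => x^(k-1) * fS N x) := by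
  apply Continuous.mul (by fun_prop)
  unfold fS
  exact continuous_finset_sum _ (fun n _ => by fun_prop)

lemma pointwise_bound (k N : ℕ) {x : ℝ} (hx0 : 0 ≤ x) (hx1 : x ≤ 1) :
    |x^(k-1) * fS N x - x^(k-1) * Real.log (1+x)/(1+x)| ≤ 1/(N+1) + H N * x^(N+1) := by
  have h1 : (0:ℝ) < 1 + x := by linarith
  have hfS : fS N x = (P N x - (-1:ℝ)^N * H N * x^(N+1))/(1+x) := by
    rw [eq_div_iff h1.ne', mul_comm, key_alg]
  have hre : x^(k-1) * fS N x - x^(k-1) * Real.log (1+x)/(1+x)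
      = x^(k-1) * (((P N x - Real.log (1+x)) - (-1:ℝ)^N * H N * x^(N+1))/(1+x)) := by
    rw [hfS]; ring
  rw [hre, abs_mul, abs_div]
  have hb1 : |x^(k-1)| ≤ 1 := by
    rw [abs_of_nonneg (pow_nonneg hx0 _)]; exact pow_le_one₀ hx0 hx1
  have hb2 : (1:ℝ) ≤ |1+x| := by rw [abs_of_pos h1]; linarith
  have hb3 : |(P N x - Real.log (1+x)) - (-1:ℝ)^N * H N * x^(N+1)|
      ≤ 1/(N+1) + H N * x^(N+1) := by
    calc |(P N x - Real.log (1+x)) - (-1:ℝ)^N * H N * x^(N+1)|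
        ≤ |P N x - Real.log (1+x)| + |(-1:ℝ)^N * H N * x^(N+1)| := abs_sub _ _
      _ ≤ 1/(N+1) + H N * x^(N+1) := by
          apply add_le_add
          · rw [abs_sub_comm]; exact log_sub_P_bound N hx0 hx1
          · rw [abs_mul, abs_mul, abs_pow, abs_pow, abs_neg, abs_one, one_pow, one_mul,
              abs_of_nonneg (H_nonneg N), abs_of_nonneg hx0]
  calc |x^(k-1)| * (|(P N x - Real.log (1+x)) - (-1:ℝ)^N * H N * x^(N+1)| / |1+x|)
      ≤ 1 * |(P N x - Real.log (1+x)) - (-1:ℝ)^N * H N * x^(N+1)| := by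
        apply mul_le_mul hb1 (div_le_self (abs_nonneg _) hb2) (by positivity) one_pos.le
    _ ≤ 1/(N+1) + H N * x^(N+1) := by rw [one_mul]; exact hb3

lemma err (k : ℕ) (hk : 0 < k) (N : ℕ) :
    |(∑ n ∈ Finset.range N, (-1:ℝ)^n * H (n+1) / ((n:ℝ)+1+k)) - II (k-1)|
      ≤ 1/(N+1) + H N/(N+2) := by
  rw [partial_eq k hk N, II,
    ← intervalIntegral.integral_sub ((cont_fS k N).intervalIntegrable 0 1)
      ((contII (k-1)).intervalIntegrable)]
  have habs : ContinuousOn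
      (fun x : ℝ => x^(k-1) * fS N x - x^(k-1) * Real.log (1+x)/(1+x)) (Set.uIcc 0 1) :=
    ((cont_fS k N).continuousOn).sub (contII (k-1))
  calc |∫ x in (0:ℝ)..1, (x^(k-1) * fS N x - x^(k-1) * Real.log (1+x)/(1+x))|
      ≤ ∫ x in (0:ℝ)..1, |x^(k-1) * fS N x - x^(k-1) * Real.log (1+x)/(1+x)| :=
        intervalIntegral.abs_integral_le_integral_abs zero_le_one
    _ ≤ ∫ x in (0:ℝ)..1, (1/(N+1) + H N * x^(N+1)) := by
        apply intervalIntegral.integral_mono_on zero_le_one habs.abs.intervalIntegrable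
          (Continuous.intervalIntegrable (by fun_prop) 0 1)
        intro x hx
        exact pointwise_bound k N hx.1 hx.2
    _ = 1/(N+1) + H N/(N+2) := by
        rw [intervalIntegral.integral_add (intervalIntegrable_const)
          (Continuous.intervalIntegrable (by fun_prop) 0 1),
          intervalIntegral.integral_const_mul, integral_pow, intervalIntegral.integral_const]
        simp
        norm_num
        push_cast
        ring

lemma bound_tendsto : Tendsto (fun N : ℕ => 1/((N:ℝ)+1) + H N/((N:ℝ)+2)) atTop (nhds 0) := by
  have t1 : Tendsto (fun N : ℕ => 1/((N:ℝ)+1)) atTop (nhds 0) :=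
    tendsto_one_div_add_atTop_nhds_zero_nat
  have t2 : Tendsto (fun N : ℕ => H N/((N:ℝ)+2)) atTop (nhds 0) := by
    apply squeeze_zero (g := fun N : ℕ => (1 + Real.log N)/((N:ℝ)+2))
    · intro N
      have := H_nonneg N
      positivity
    · intro N
      gcongr
      exact H_le N
    · have t3 : Tendsto (fun N : ℕ => Real.log N/((N:ℝ)+2)) atTop (nhds 0) := by
        have := (Real.tendsto_pow_log_div_mul_add_atTop 1 2 1 one_ne_zero).comp
          (tendsto_natCast_atTop_atTop (R := ℝ))
        simpa [Function.comp_def] using this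
      have t4 : Tendsto (fun N : ℕ => 1/((N:ℝ)+2)) atTop (nhds 0) := by
        apply squeeze_zero (g := fun N : ℕ => 1/((N:ℝ)+1))
        · intro N; positivity
        · intro N; gcongr <;> norm_num
        · exact t1
      have := t4.add t3
      rw [add_zero] at this
      apply this.congr
      intro N
      ring
  have := t1.add t2
  rwa [add_zero] at this

theorem stmt16 (k : ℕ) (hk : 0 < k) :
    Tendsto (fun N => ∑ n ∈ Finset.range N, (-1 : ℝ) ^ n * H (n + 1) / ((n : ℝ) + 1 + k))
      atTop
      (nhds ((-1 : ℝ) ^ (k - 1) *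
        ((Real.log 2) ^ 2 / 2 - Real.log 2 * (H (k - 1) + La 1 (k - 1)) +
          ∑ i ∈ Finset.Icc 1 (k - 1), La 1 i / i))) := by
  have hval : (-1 : ℝ) ^ (k - 1) *
      ((Real.log 2) ^ 2 / 2 - Real.log 2 * (H (k - 1) + La 1 (k - 1)) +
        ∑ i ∈ Finset.Icc 1 (k - 1), La 1 i / i) = II (k-1) := by
    rw [II_closed, Af]
  rw [hval]
  have h0 : Tendsto (fun N => (∑ n ∈ Finset.range N, (-1 : ℝ) ^ n * H (n + 1) / ((n : ℝ) + 1 + k))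
      - II (k-1)) atTop (nhds 0) := by
    apply squeeze_zero_norm (fun N => ?_) bound_tendsto
    simpa using err k hk N
  have := h0.add_const (II (k-1))
  rw [zero_add] at this
  apply this.congr
  intro N
  ring
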